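/- For every integer N ≥ 1, h = 1/N and every z ∈ [0,1], the vector (C̊_0(z),…,C̊_N(z)) is the unique minimizer of the quadratic form Q_1(C) = −( Σ_{β=0}^N Σ_{γ=0}^N C_β C_γ G_1(hβ − hγ) − 2 Σ_{β=0}^N C_β G_1(z − hβ) ) over all vectors C = (C_0,…,C_N) ∈ ℝ^{N+1} satisfying the constraint Σ_{β=0}^N C_β e^{−hβ} = e^{−z}. (Q_1(C) equals the squared norm of the error functional of the interpolation formula with coefficients C in the space W_2^{(1,0)}(0,1).) -/

import Mathlib

/-- `G₁(x) = sgn(x)·(eˣ − e⁻ˣ)/4`, with `sgn 0 = 0`. -/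
noncomputable def G1 (x : ℝ) : ℝ := Real.sign x * (Real.exp x - Real.exp (-x)) / 4

/-- The optimal coefficients `C̊_β(z)` of the optimal interpolation formula in
`W₂^{(1,0)}(0,1)` with equally spaced nodes `x_β = βh`, `h = 1/N`. -/
noncomputable def optC1 (N : ℕ) (z : ℝ) (β : ℕ) : ℝ :=
  let h : ℝ := 1 / N;
  1 / (2 * (1 - Real.exp (2 * h))) *
    (Real.sign (z - h * β - h) * (Real.exp (h * β + 2 * h - z) - Real.exp (z - h * β))
      + Real.sign (z - h * β + h) * (Real.exp (h * β - z) - Real.exp (z - h * β + 2 * h))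
      + (1 + Real.exp (2 * h)) * Real.sign (z - h * β) *
          (Real.exp (z - h * β) - Real.exp (h * β - z)))

/-- The quadratic form `Q₁(C) = −(Σ_β Σ_γ C_β C_γ G₁(hβ−hγ) − 2 Σ_β C_β G₁(z−hβ))`,
the squared norm of the error functional in `W₂^{(1,0)*}(0,1)`. -/
noncomputable def Q1 (N : ℕ) (z : ℝ) (C : ℕ → ℝ) : ℝ :=
  let h : ℝ := 1 / N;
  -((∑ β ∈ Finset.range (N + 1), (∑ γ ∈ Finset.range (N + 1),
        C β * C γ * G1 (h * β - h * γ)))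
    - 2 * ∑ β ∈ Finset.range (N + 1), C β * G1 (z - h * β))

open Real Finset


lemma G1_neg (x : ℝ) : G1 (-x) = G1 x := by
  unfold G1
  rcases lt_trichotomy x 0 with h|h|h
  · rw [Real.sign_of_neg h, Real.sign_of_pos (by linarith : (0:ℝ) < -x)]; ring_nf
  · simp [h]
  · rw [Real.sign_of_pos h, Real.sign_of_neg (by linarith : -x < 0)]; ring_nf

lemma G1_of_nonneg {x : ℝ} (hx : 0 ≤ x) : G1 x = (Real.exp x - Real.exp (-x)) / 4 := by
  rcases eq_or_lt_of_le hx with h|h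
  · simp [G1, ← h]
  · rw [G1, Real.sign_of_pos h]; ring

lemma G1_of_nonpos {x : ℝ} (hx : x ≤ 0) : G1 x = (Real.exp (-x) - Real.exp x) / 4 := by
  rw [← G1_neg, G1_of_nonneg (by linarith : 0 ≤ -x), neg_neg]

lemma G1_eq (d : ℝ) : G1 d = (Real.exp d + Real.exp (-d)) / 4 - Real.exp (-|d|) / 2 := by
  rcases le_or_gt 0 d with h|h
  · rw [G1_of_nonneg h, abs_of_nonneg h]; ring
  · rw [G1_of_nonpos h.le, abs_of_neg h]; ring_nf


noncomputable def body (h z b : ℝ) : ℝ :=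
  1 / (2 * (1 - Real.exp (2 * h))) *
    (Real.sign (z - b - h) * (Real.exp (b + 2 * h - z) - Real.exp (z - b))
      + Real.sign (z - b + h) * (Real.exp (b - z) - Real.exp (z - b + 2 * h))
      + (1 + Real.exp (2 * h)) * Real.sign (z - b) *
          (Real.exp (z - b) - Real.exp (b - z)))

lemma one_lt_exp_of_pos {h : ℝ} (hh : 0 < h) : 1 < Real.exp h := by
  nlinarith [Real.add_one_le_exp h]

lemma expne {h : ℝ} (hh : 0 < h) : (1:ℝ) - Real.exp h * Real.exp h ≠ 0 := by
  have := one_lt_exp_of_pos hh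
  exact ne_of_lt (by nlinarith)

lemma body_left {h z b : ℝ} (hh : 0 < h) (hb : b + h ≤ z) : body h z b = 0 := by
  have h1 := expne hh
  unfold body
  rcases eq_or_lt_of_le hb with he|he
  · rw [show z - b - h = (0:ℝ) from by linarith,
        show z - b + 2*h = h + h + h from by linarith,
        show z - b + h = h + h from by linarith,
        show b + 2*h - z = h from by linarith,
        show b - z = -h from by linarith,
        show z - b = h from by linarith,
        show (2:ℝ)*h = h + h from by ring]
    rw [Real.sign_zero, Real.sign_of_pos hh,
        Real.sign_of_pos (by linarith : (0:ℝ) < h + h)]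
    simp only [Real.exp_add, Real.exp_neg]
    field_simp
    ring
  · rw [Real.sign_of_pos (by linarith : (0:ℝ) < z - b - h),
        Real.sign_of_pos (by linarith : (0:ℝ) < z - b + h),
        Real.sign_of_pos (by linarith : (0:ℝ) < z - b),
        show (2:ℝ)*h = h + h from by ring]
    simp only [Real.exp_add, Real.exp_sub, Real.exp_neg]
    field_simp
    ring

lemma body_right {h z b : ℝ} (hh : 0 < h) (hb : z + h ≤ b) : body h z b = 0 := by
  have h1 := expne hh
  unfold body
  rcases eq_or_lt_of_le hb with he|he
  · rw [show z - b - h = -(h + h) from by linarith,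
        show z - b + 2*h = h from by linarith,
        show z - b + h = (0:ℝ) from by linarith,
        show b + 2*h - z = h + h + h from by linarith,
        show b - z = h from by linarith,
        show z - b = -h from by linarith,
        show (2:ℝ)*h = h + h from by ring]
    rw [Real.sign_zero, Real.sign_of_neg (by linarith : -(h+h) < (0:ℝ)),
        Real.sign_of_neg (by linarith : -h < (0:ℝ))]
    simp only [Real.exp_add, Real.exp_neg]
    field_simp
    ring
  · rw [Real.sign_of_neg (by linarith : z - b - h < (0:ℝ)),
        Real.sign_of_neg (by linarith : z - b + h < (0:ℝ)),
        Real.sign_of_neg (by linarith : z - b < (0:ℝ)),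
        show (2:ℝ)*h = h + h from by ring]
    simp only [Real.exp_add, Real.exp_sub, Real.exp_neg]
    field_simp
    ring

lemma body_A {h z b : ℝ} (hh : 0 < h) (h0 : 0 ≤ z - b) (h1 : z - b ≤ h) :
    body h z b = (Real.exp (z - b) - Real.exp (2*h + b - z)) / (1 - Real.exp (2*h)) := by
  have hne := expne hh
  unfold body
  rcases eq_or_lt_of_le h0 with he|he
  · rw [show z - b - h = -h from by linarith,
        show z - b + 2*h = h + h from by linarith,
        show z - b + h = h from by linarith,
        show b + 2*h - z = h + h from by linarith,
        show 2*h + b - z = h + h from by linarith,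
        show b - z = (0:ℝ) from by linarith,
        show z - b = (0:ℝ) from by linarith,
        show (2:ℝ)*h = h + h from by ring]
    rw [Real.sign_zero, Real.sign_of_pos hh, Real.sign_of_neg (by linarith : -h < (0:ℝ))]
    simp only [Real.exp_add, Real.exp_neg, Real.exp_zero]
    field_simp
    ring
  · rcases eq_or_lt_of_le h1 with he2|he2
    · rw [show z - b - h = (0:ℝ) from by linarith,
          show z - b + 2*h = h + h + h from by linarith,
          show z - b + h = h + h from by linarith,
          show b + 2*h - z = h from by linarith,
          show 2*h + b - z = h from by linarith,
          show b - z = -h from by linarith,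
          show z - b = h from by linarith,
          show (2:ℝ)*h = h + h from by ring]
      rw [Real.sign_zero, Real.sign_of_pos hh,
          Real.sign_of_pos (by linarith : (0:ℝ) < h + h)]
      simp only [Real.exp_add, Real.exp_neg]
      field_simp
      ring
    · rw [Real.sign_of_neg (by linarith : z - b - h < (0:ℝ)),
          Real.sign_of_pos (by linarith : (0:ℝ) < z - b + h),
          Real.sign_of_pos he,
          show (2:ℝ)*h = h + h from by ring]
      simp only [Real.exp_add, Real.exp_sub, Real.exp_neg]
      field_simp
      ring

lemma body_B {h z b : ℝ} (hh : 0 < h) (h0 : -h ≤ z - b) (h1 : z - b ≤ 0) :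
    body h z b = (Real.exp (b - z) - Real.exp (z - b + 2*h)) / (1 - Real.exp (2*h)) := by
  have hne := expne hh
  unfold body
  rcases eq_or_lt_of_le h1 with he|he
  · rw [show z - b - h = -h from by linarith,
        show z - b + 2*h = h + h from by linarith,
        show z - b + h = h from by linarith,
        show b + 2*h - z = h + h from by linarith,
        show b - z = (0:ℝ) from by linarith,
        show z - b = (0:ℝ) from by linarith,
        show (2:ℝ)*h = h + h from by ring]
    rw [Real.sign_zero, Real.sign_of_pos hh, Real.sign_of_neg (by linarith : -h < (0:ℝ))]
    simp only [Real.exp_add, Real.exp_neg, Real.exp_zero]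
    field_simp
    ring
  · rcases eq_or_lt_of_le h0 with he2|he2
    · rw [show z - b - h = -(h + h) from by linarith,
          show z - b + 2*h = h from by linarith,
          show z - b + h = (0:ℝ) from by linarith,
          show b + 2*h - z = h + h + h from by linarith,
          show b - z = h from by linarith,
          show z - b = -h from by linarith,
          show (2:ℝ)*h = h + h from by ring]
      rw [Real.sign_zero, Real.sign_of_neg (by linarith : -(h+h) < (0:ℝ)),
          Real.sign_of_neg (by linarith : -h < (0:ℝ))]
      simp only [Real.exp_add, Real.exp_neg]
      field_simp
      ring
    · rw [Real.sign_of_neg (by linarith : z - b - h < (0:ℝ)),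
          Real.sign_of_pos (by linarith : (0:ℝ) < z - b + h),
          Real.sign_of_neg he,
          show (2:ℝ)*h = h + h from by ring]
      simp only [Real.exp_add, Real.exp_sub, Real.exp_neg]
      field_simp
      ring

lemma key_feas {h z a : ℝ} (hh : 0 < h) :
    (Real.exp (z - a) - Real.exp (2*h + a - z)) / (1 - Real.exp (2*h)) * Real.exp (-a)
      + (Real.exp (a + h - z) - Real.exp (z - (a + h) + 2*h)) / (1 - Real.exp (2*h))
          * Real.exp (-(a + h))
      = Real.exp (-z) := by
  have hne := expne hh
  have hne2 : (1:ℝ) - Real.exp h ^ 2 ≠ 0 := by rw [sq]; exact hne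
  rw [show (2:ℝ)*h = h + h from by ring]
  simp only [Real.exp_add, Real.exp_sub, Real.exp_neg]
  field_simp
  ring

lemma key_lag {h z a : ℝ} (hh : 0 < h) (x : ℝ) :
    (Real.exp (a - x) - Real.exp (x - a)) / 4
        * ((Real.exp (z - a) - Real.exp (2*h + a - z)) / (1 - Real.exp (2*h)))
      + (Real.exp (a + h - x) - Real.exp (x - (a + h))) / 4
        * ((Real.exp (a + h - z) - Real.exp (z - (a + h) + 2*h)) / (1 - Real.exp (2*h)))
      = (Real.exp (z - x) - Real.exp (x - z)) / 4 := by
  have hne := expne hh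
  have hne2 : (1:ℝ) - Real.exp h ^ 2 ≠ 0 := by rw [sq]; exact hne
  rw [show (2:ℝ)*h = h + h from by ring]
  simp only [Real.exp_add, Real.exp_sub, Real.exp_neg]
  field_simp
  ring

lemma kernel_decomp {h : ℝ} (hh : 0 ≤ h) {N β γ : ℕ} (hβ : β ≤ N) (hγ : γ ≤ N) :
    Real.exp (-|h*β - h*γ|)
      = Real.exp (-(h*β)) * Real.exp (-(h*γ)) *
        (1 + ∑ k ∈ Finset.range N, if k < β ∧ k < γ then
            (Real.exp (h*(k+1:ℕ) + h*(k+1:ℕ)) - Real.exp (h*(k:ℕ) + h*(k:ℕ))) else 0) := by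
  set f : ℕ → ℝ := fun k => Real.exp (h*(k:ℕ) + h*(k:ℕ)) with hf
  have hmin : min β γ ≤ N := le_trans (min_le_left _ _) hβ
  have hsum : (∑ k ∈ Finset.range N, if k < β ∧ k < γ then (f (k+1) - f k) else 0)
      = f (min β γ) - 1 := by
    have h1 : (∑ k ∈ Finset.range N, if k < β ∧ k < γ then (f (k+1) - f k) else 0)
        = ∑ k ∈ Finset.range (min β γ), (f (k+1) - f k) := by
      rw [← Finset.sum_filter]
      apply Finset.sum_congr _ (fun _ _ => rfl)
      ext x
      simp only [Finset.mem_filter, Finset.mem_range, lt_min_iff]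
      omega
    rw [h1, Finset.sum_range_sub f (min β γ)]
    simp [hf]
  rw [show (∑ k ∈ Finset.range N, if k < β ∧ k < γ then
            (Real.exp (h*(k+1:ℕ) + h*(k+1:ℕ)) - Real.exp (h*(k:ℕ) + h*(k:ℕ))) else 0)
      = (∑ k ∈ Finset.range N, if k < β ∧ k < γ then (f (k+1) - f k) else 0) from rfl, hsum]
  rcases le_total β γ with hc|hc
  · have hm : min β γ = β := min_eq_left hc
    have habs : |h*β - h*γ| = h*γ - h*β := by
      rw [abs_of_nonpos]
      · ring
      · have : (β:ℝ) ≤ γ := by exact_mod_cast hc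
        nlinarith
    rw [habs, hm]
    show Real.exp (-(h*↑γ - h*↑β)) = Real.exp (-(h * ↑β)) * Real.exp (-(h * ↑γ)) *
        (1 + (Real.exp (h*↑β + h*↑β) - 1))
    rw [show (1:ℝ) + (Real.exp (h*↑β + h*↑β) - 1) = Real.exp (h*↑β + h*↑β) from by ring,
        ← Real.exp_add, ← Real.exp_add]
    congr 1
    ring
  · have hm : min β γ = γ := min_eq_right hc
    have habs : |h*β - h*γ| = h*β - h*γ := by
      rw [abs_of_nonneg]
      have : (γ:ℝ) ≤ β := by exact_mod_cast hc
      nlinarith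
    rw [habs, hm]
    show Real.exp (-(h*↑β - h*↑γ)) = Real.exp (-(h * ↑β)) * Real.exp (-(h * ↑γ)) *
        (1 + (Real.exp (h*↑γ + h*↑γ) - 1))
    rw [show (1:ℝ) + (Real.exp (h*↑γ + h*↑γ) - 1) = Real.exp (h*↑γ + h*↑γ) from by ring,
        ← Real.exp_add, ← Real.exp_add]
    congr 1
    ring

lemma optC1_eq_body (N : ℕ) (z : ℝ) (β : ℕ) :
    optC1 N z β = body (1/(N:ℝ)) z ((1/(N:ℝ))*β) := rfl

lemma Q1_eq (N : ℕ) (z : ℝ) (C : ℕ → ℝ) :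
    Q1 N z C = -((∑ β ∈ Finset.range (N + 1), (∑ γ ∈ Finset.range (N + 1),
        C β * C γ * G1 ((1/(N:ℝ)) * β - (1/(N:ℝ)) * γ)))
      - 2 * ∑ β ∈ Finset.range (N + 1), C β * G1 (z - (1/(N:ℝ)) * β)) := rfl

set_option maxHeartbeats 1000000 in
/-- For every `N ≥ 1`, `h = 1/N` and every `z ∈ [0,1]`, the vector `(C̊_0(z),…,C̊_N(z))` is
the unique minimizer of `Q₁` over all vectors satisfying `Σ_β C_β e^{−hβ} = e^{−z}`:
it is feasible, minimizes `Q₁` among feasible vectors, and any feasible minimizer agrees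
with it in all coordinates `β ≤ N`. -/
theorem optC1_unique_minimizer (N : ℕ) (hN : 1 ≤ N) (z : ℝ)
    (hz : z ∈ Set.Icc (0 : ℝ) 1) :
    (∑ β ∈ Finset.range (N + 1), optC1 N z β * Real.exp (-((1 / N : ℝ) * β))
        = Real.exp (-z)) ∧
    (∀ C : ℕ → ℝ,
      (∑ β ∈ Finset.range (N + 1), C β * Real.exp (-((1 / N : ℝ) * β)) = Real.exp (-z)) →
        Q1 N z (fun β => optC1 N z β) ≤ Q1 N z C ∧
        (Q1 N z C = Q1 N z (fun β => optC1 N z β) → ∀ β ≤ N, C β = optC1 N z β)) := by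
  obtain ⟨hz0, hz1⟩ := hz
  have hNr : (0:ℝ) < N := by exact_mod_cast hN
  set h : ℝ := 1 / (N:ℝ) with hhdef
  have hh : 0 < h := by positivity
  have hhN : h * N = 1 := by rw [hhdef]; field_simp
  -- the index α of the subinterval containing z
  set α : ℕ := min (Nat.floor (z * N)) (N - 1) with hαdef
  have hα1 : α + 1 ≤ N := by omega
  have hcastα1 : ((α + 1 : ℕ) : ℝ) = (α : ℝ) + 1 := by push_cast; ring
  have hlow : h * α ≤ z := by
    have h1 : ((α:ℕ) : ℝ) ≤ z * N := by
      calc ((α:ℕ):ℝ) ≤ ((Nat.floor (z * N) : ℕ) : ℝ) := by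
            exact_mod_cast min_le_left _ _
        _ ≤ z * N := Nat.floor_le (by positivity)
    calc h * α ≤ h * (z * N) := mul_le_mul_of_nonneg_left h1 hh.le
      _ = z * (h * N) := by ring
      _ = z := by rw [hhN]; ring
  have hhigh : z ≤ h * α + h := by
    rcases le_or_gt (Nat.floor (z * N)) (N - 1) with hc|hc
    · have hα' : α = Nat.floor (z * N) := min_eq_left hc
      have h2 : z * N < ((Nat.floor (z * N) : ℕ) : ℝ) + 1 := Nat.lt_floor_add_one _
      have h3 : z * N < (α : ℝ) + 1 := by rw [hα']; exact_mod_cast h2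
      have h4 : h * (z * N) ≤ h * ((α:ℝ) + 1) := mul_le_mul_of_nonneg_left h3.le hh.le
      calc z = z * (h * N) := by rw [hhN]; ring
        _ = h * (z * N) := by ring
        _ ≤ h * ((α:ℝ) + 1) := h4
        _ = h * α + h := by ring
    · have hα' : α = N - 1 := min_eq_right (by omega)
      have h5 : ((α:ℕ):ℝ) + 1 = (N:ℝ) := by
        rw [hα']
        have : ((N - 1 : ℕ) : ℝ) = (N:ℝ) - 1 := by
          have := Nat.cast_sub hN (R := ℝ); simpa using this
        rw [this]; ring
      calc z ≤ 1 := hz1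
        _ = h * N := hhN.symm
        _ = h * ((α:ℝ) + 1) := by rw [h5]
        _ = h * α + h := by ring
  set a : ℝ := h * α with hadef
  have hap1 : h * ((α + 1 : ℕ) : ℝ) = a + h := by rw [hcastα1, hadef]; ring
  -- closed form of the optimal coefficients
  have hCsα : optC1 N z α
      = (Real.exp (z - a) - Real.exp (2*h + a - z)) / (1 - Real.exp (2*h)) := by
    rw [optC1_eq_body]
    exact body_A hh (by linarith) (by linarith)
  have hCsα1 : optC1 N z (α + 1)
      = (Real.exp ((a + h) - z) - Real.exp (z - (a + h) + 2*h)) / (1 - Real.exp (2*h)) := by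
    rw [optC1_eq_body, hap1]
    exact body_B hh (by linarith) (by linarith)
  have hCs0 : ∀ β : ℕ, β ≠ α → β ≠ α + 1 → optC1 N z β = 0 := by
    intro β hne1 hne2
    rw [optC1_eq_body]
    rcases (by omega : β < α ∨ α + 1 < β) with hc|hc
    · apply body_left hh
      have hcast : ((β:ℕ):ℝ) + 1 ≤ ((α:ℕ):ℝ) := by exact_mod_cast hc
      have := mul_le_mul_of_nonneg_left hcast hh.le
      have ha' : a = h * α := hadef
      nlinarith
    · apply body_right hh
      have hcast : ((α:ℕ):ℝ) + 2 ≤ ((β:ℕ):ℝ) := by exact_mod_cast hc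
      have := mul_le_mul_of_nonneg_left hcast hh.le
      nlinarith
  have hpair : ({α, α + 1} : Finset ℕ) ⊆ Finset.range (N + 1) := by
    intro x hx
    simp only [Finset.mem_insert, Finset.mem_singleton] at hx
    rcases hx with rfl|rfl <;> simp [Finset.mem_range] <;> omega
  have hαne : α ≠ α + 1 := by omega
  -- feasibility
  have hfeas : ∑ β ∈ Finset.range (N + 1), optC1 N z β * Real.exp (-(h * β))
      = Real.exp (-z) := by
    rw [← Finset.sum_subset hpair (by
      intro x _ hx
      simp only [Finset.mem_insert, Finset.mem_singleton] at hx
      push_neg at hx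
      rw [hCs0 x hx.1 hx.2]
      ring)]
    rw [Finset.sum_pair hαne, hCsα, hCsα1, hap1]
    exact key_feas hh
  -- the Lagrange identity
  have hF : ∀ β : ℕ, (∑ γ ∈ Finset.range (N + 1), G1 (h * β - h * γ) * optC1 N z γ)
      = G1 (z - h * β) := by
    intro β
    rw [← Finset.sum_subset hpair (by
      intro x _ hx
      simp only [Finset.mem_insert, Finset.mem_singleton] at hx
      push_neg at hx
      rw [hCs0 x hx.1 hx.2]
      ring)]
    rw [Finset.sum_pair hαne, hCsα, hCsα1, hap1]
    rcases le_or_gt β α with hc|hc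
    · have hcast : ((β:ℕ):ℝ) ≤ ((α:ℕ):ℝ) := by exact_mod_cast hc
      have hba : h * β ≤ a := by
        rw [hadef]; exact mul_le_mul_of_nonneg_left hcast hh.le
      rw [G1_of_nonpos (by linarith : h * (β:ℝ) - a ≤ 0),
          G1_of_nonpos (by linarith : h * (β:ℝ) - (a + h) ≤ 0),
          G1_of_nonneg (by linarith : (0:ℝ) ≤ z - h * β)]
      rw [show -(h * (β:ℝ) - a) = a - h * β from by ring,
          show -(h * (β:ℝ) - (a + h)) = a + h - h * β from by ring,
          show -(z - h * (β:ℝ)) = h * β - z from by ring]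
      exact key_lag hh (h * β)
    · have hcast : ((α:ℕ):ℝ) + 1 ≤ ((β:ℕ):ℝ) := by exact_mod_cast hc
      have hba : a + h ≤ h * β := by
        have := mul_le_mul_of_nonneg_left hcast hh.le
        rw [hadef]; nlinarith
      rw [G1_of_nonneg (by linarith : (0:ℝ) ≤ h * (β:ℝ) - a),
          G1_of_nonneg (by linarith : (0:ℝ) ≤ h * (β:ℝ) - (a + h)),
          G1_of_nonpos (by linarith : z - h * (β:ℝ) ≤ 0)]
      rw [show -(h * (β:ℝ) - a) = a - h * β from by ring,
          show -(h * (β:ℝ) - (a + h)) = a + h - h * β from by ring,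
          show -(z - h * (β:ℝ)) = h * β - z from by ring]
      linear_combination (-1 : ℝ) * key_lag (z := z) (a := a) hh (h * (β:ℝ))
  refine ⟨hfeas, ?_⟩
  intro C hC
  set Cs : ℕ → ℝ := fun β => optC1 N z β with hCsdef
  set D : ℕ → ℝ := fun β => C β - Cs β with hDdef
  set W : ℕ → ℝ := fun k =>
    Real.exp (h * ((k+1 : ℕ):ℝ) + h * ((k+1 : ℕ):ℝ))
      - Real.exp (h * ((k : ℕ):ℝ) + h * ((k : ℕ):ℝ)) with hWdef
  set S : ℕ → ℝ := fun k =>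
    ∑ β ∈ Finset.range (N+1), (if k < β then D β * Real.exp (-(h * β)) else 0) with hSdef
  have hGsymm : ∀ β γ : ℕ, G1 (h * (β:ℝ) - h * γ) = G1 (h * (γ:ℝ) - h * β) := by
    intro β γ
    rw [show h * (β:ℝ) - h * γ = -(h * (γ:ℝ) - h * β) from by ring, G1_neg]
  -- the difference of the constraint sums
  have hT : ∑ β ∈ Finset.range (N+1), D β * Real.exp (-(h * β)) = 0 := by
    have e1 : ∑ β ∈ Finset.range (N+1), D β * Real.exp (-(h * β))
        = (∑ β ∈ Finset.range (N+1), C β * Real.exp (-(h * β)))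
          - ∑ β ∈ Finset.range (N+1), Cs β * Real.exp (-(h * β)) := by
      rw [← Finset.sum_sub_distrib]
      exact Finset.sum_congr rfl fun β _ => by simp only [hDdef, hCsdef]; ring
    rw [e1, hC]
    have : ∑ β ∈ Finset.range (N+1), Cs β * Real.exp (-(h * β)) = Real.exp (-z) := hfeas
    rw [this]; ring
  -- expansion of the quadratic form
  have hexp : ∑ β ∈ Finset.range (N+1), ∑ γ ∈ Finset.range (N+1),
        C β * C γ * G1 (h * β - h * γ)
      = (∑ β ∈ Finset.range (N+1), ∑ γ ∈ Finset.range (N+1),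
          Cs β * Cs γ * G1 (h * β - h * γ))
        + ((∑ β ∈ Finset.range (N+1), ∑ γ ∈ Finset.range (N+1),
          D β * Cs γ * G1 (h * β - h * γ))
        + ((∑ β ∈ Finset.range (N+1), ∑ γ ∈ Finset.range (N+1),
          Cs β * D γ * G1 (h * β - h * γ))
        + (∑ β ∈ Finset.range (N+1), ∑ γ ∈ Finset.range (N+1),
          D β * D γ * G1 (h * β - h * γ)))) := by
    simp only [← Finset.sum_add_distrib]
    exact Finset.sum_congr rfl fun β _ => Finset.sum_congr rfl fun γ _ => by
      simp only [hDdef, hCsdef]; ring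
  have hcross1 : ∑ β ∈ Finset.range (N+1), ∑ γ ∈ Finset.range (N+1),
        D β * Cs γ * G1 (h * β - h * γ)
      = ∑ β ∈ Finset.range (N+1), D β * G1 (z - h * β) := by
    refine Finset.sum_congr rfl fun β _ => ?_
    calc ∑ γ ∈ Finset.range (N+1), D β * Cs γ * G1 (h * β - h * γ)
        = D β * ∑ γ ∈ Finset.range (N+1), G1 (h * β - h * γ) * optC1 N z γ := by
          rw [Finset.mul_sum]
          exact Finset.sum_congr rfl fun γ _ => by simp only [hCsdef]; ring
      _ = D β * G1 (z - h * β) := by rw [hF β]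
  have hcross2 : ∑ β ∈ Finset.range (N+1), ∑ γ ∈ Finset.range (N+1),
        Cs β * D γ * G1 (h * β - h * γ)
      = ∑ β ∈ Finset.range (N+1), D β * G1 (z - h * β) := by
    rw [Finset.sum_comm]
    refine Finset.sum_congr rfl fun γ _ => ?_
    calc ∑ β ∈ Finset.range (N+1), Cs β * D γ * G1 (h * β - h * γ)
        = D γ * ∑ β ∈ Finset.range (N+1), G1 (h * γ - h * β) * optC1 N z β := by
          rw [Finset.mul_sum]
          refine Finset.sum_congr rfl fun β _ => ?_
          rw [hGsymm β γ]
          simp only [hCsdef]; ring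
      _ = D γ * G1 (z - h * γ) := by rw [hF γ]
  have hlin : ∑ β ∈ Finset.range (N+1), C β * G1 (z - h * β)
      = (∑ β ∈ Finset.range (N+1), Cs β * G1 (z - h * β))
        + ∑ β ∈ Finset.range (N+1), D β * G1 (z - h * β) := by
    rw [← Finset.sum_add_distrib]
    exact Finset.sum_congr rfl fun β _ => by simp only [hDdef, hCsdef]; ring
  have hQdiff : Q1 N z C = Q1 N z Cs
      - ∑ β ∈ Finset.range (N+1), ∑ γ ∈ Finset.range (N+1),
          D β * D γ * G1 (h * β - h * γ) := by
    rw [Q1_eq, Q1_eq, ← hhdef, hexp, hcross1, hcross2, hlin]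
    ring
  -- rewriting the quadratic form of D via the kernel exp(-|x-y|)
  have hDDG : ∑ β ∈ Finset.range (N+1), ∑ γ ∈ Finset.range (N+1),
        D β * D γ * G1 (h * β - h * γ)
      = ((∑ β ∈ Finset.range (N+1), D β * Real.exp (h * β))
          * ∑ γ ∈ Finset.range (N+1), D γ * Real.exp (-(h * γ))) / 4
        + ((∑ β ∈ Finset.range (N+1), D β * Real.exp (-(h * β)))
          * ∑ γ ∈ Finset.range (N+1), D γ * Real.exp (h * γ)) / 4
        - (∑ β ∈ Finset.range (N+1), ∑ γ ∈ Finset.range (N+1),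
            D β * D γ * Real.exp (-|h * β - h * γ|)) / 2 := by
    simp only [Finset.sum_mul_sum, Finset.sum_div]
    rw [← Finset.sum_add_distrib, ← Finset.sum_sub_distrib]
    refine Finset.sum_congr rfl fun β _ => ?_
    rw [← Finset.sum_add_distrib, ← Finset.sum_sub_distrib]
    refine Finset.sum_congr rfl fun γ _ => ?_
    rw [G1_eq (h * (β:ℝ) - h * γ)]
    rw [show -(h * (β:ℝ) - h * γ) = h * (γ:ℝ) - h * β from by ring]
    rw [Real.exp_sub, Real.exp_sub]
    simp only [Real.exp_neg]
    field_simp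
  have hDDG2 : ∑ β ∈ Finset.range (N+1), ∑ γ ∈ Finset.range (N+1),
        D β * D γ * G1 (h * β - h * γ)
      = -(∑ β ∈ Finset.range (N+1), ∑ γ ∈ Finset.range (N+1),
            D β * D γ * Real.exp (-|h * β - h * γ|)) / 2 := by
    rw [hDDG, hT]
    ring
  -- decomposition of the kernel quadratic form as a sum of squares
  have hM : ∑ β ∈ Finset.range (N+1), ∑ γ ∈ Finset.range (N+1),
        D β * D γ * Real.exp (-|h * β - h * γ|)
      = (∑ β ∈ Finset.range (N+1), D β * Real.exp (-(h * β)))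
          * (∑ β ∈ Finset.range (N+1), D β * Real.exp (-(h * β)))
        + ∑ k ∈ Finset.range N, S k * S k * W k := by
    have step1 : ∀ β ∈ Finset.range (N+1), ∀ γ ∈ Finset.range (N+1),
        D β * D γ * Real.exp (-|h * β - h * γ|)
        = (D β * Real.exp (-(h * β))) * (D γ * Real.exp (-(h * γ)))
          + ∑ k ∈ Finset.range N,
              (if k < β then D β * Real.exp (-(h * β)) else 0)
              * (if k < γ then D γ * Real.exp (-(h * γ)) else 0) * W k := by
      intro β hβ γ hγ
      rw [Finset.mem_range] at hβ hγ
      have hptk : ∀ k : ℕ, (if k < β then D β * Real.exp (-(h * β)) else 0)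
            * (if k < γ then D γ * Real.exp (-(h * γ)) else 0) * W k
          = (D β * Real.exp (-(h * β))) * (D γ * Real.exp (-(h * γ)))
            * (if k < β ∧ k < γ then W k else 0) := by
        intro k
        by_cases h1 : k < β <;> by_cases h2 : k < γ <;> simp [h1, h2]
      rw [kernel_decomp hh.le (by omega : β ≤ N) (by omega : γ ≤ N)]
      simp only [hptk]
      rw [← Finset.mul_sum]
      simp only [hWdef]
      ring
    calc ∑ β ∈ Finset.range (N+1), ∑ γ ∈ Finset.range (N+1),
          D β * D γ * Real.exp (-|h * β - h * γ|)
        = ∑ β ∈ Finset.range (N+1), ∑ γ ∈ Finset.range (N+1),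
            ((D β * Real.exp (-(h * β))) * (D γ * Real.exp (-(h * γ)))
              + ∑ k ∈ Finset.range N,
                  (if k < β then D β * Real.exp (-(h * β)) else 0)
                  * (if k < γ then D γ * Real.exp (-(h * γ)) else 0) * W k) :=
          Finset.sum_congr rfl fun β hβ => Finset.sum_congr rfl fun γ hγ =>
            step1 β hβ γ hγ
      _ = (∑ β ∈ Finset.range (N+1), ∑ γ ∈ Finset.range (N+1),
            (D β * Real.exp (-(h * β))) * (D γ * Real.exp (-(h * γ))))
          + ∑ β ∈ Finset.range (N+1), ∑ γ ∈ Finset.range (N+1),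
              ∑ k ∈ Finset.range N,
                (if k < β then D β * Real.exp (-(h * β)) else 0)
                * (if k < γ then D γ * Real.exp (-(h * γ)) else 0) * W k := by
          simp only [Finset.sum_add_distrib]
      _ = (∑ β ∈ Finset.range (N+1), D β * Real.exp (-(h * β)))
            * (∑ β ∈ Finset.range (N+1), D β * Real.exp (-(h * β)))
          + ∑ k ∈ Finset.range N, S k * S k * W k := by
          congr 1
          · rw [Finset.sum_mul_sum]
          · rw [show ∑ β ∈ Finset.range (N+1), ∑ γ ∈ Finset.range (N+1),
                ∑ k ∈ Finset.range N,
                  (if k < β then D β * Real.exp (-(h * β)) else 0)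
                  * (if k < γ then D γ * Real.exp (-(h * γ)) else 0) * W k
              = ∑ k ∈ Finset.range N, ∑ β ∈ Finset.range (N+1),
                  ∑ γ ∈ Finset.range (N+1),
                  (if k < β then D β * Real.exp (-(h * β)) else 0)
                  * (if k < γ then D γ * Real.exp (-(h * γ)) else 0) * W k from by
                rw [show ∑ β ∈ Finset.range (N+1), ∑ γ ∈ Finset.range (N+1),
                    ∑ k ∈ Finset.range N,
                      (if k < β then D β * Real.exp (-(h * β)) else 0)
                      * (if k < γ then D γ * Real.exp (-(h * γ)) else 0) * W k
                  = ∑ β ∈ Finset.range (N+1), ∑ k ∈ Finset.range N,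
                      ∑ γ ∈ Finset.range (N+1),
                      (if k < β then D β * Real.exp (-(h * β)) else 0)
                      * (if k < γ then D γ * Real.exp (-(h * γ)) else 0) * W k from
                    Finset.sum_congr rfl fun β _ => Finset.sum_comm]
                exact Finset.sum_comm]
            refine Finset.sum_congr rfl fun k _ => ?_
            rw [hSdef]
            rw [Finset.sum_mul_sum, Finset.sum_mul]
            refine Finset.sum_congr rfl fun β _ => ?_
            rw [Finset.sum_mul]
  have hSval : ∀ k, S k = ∑ β ∈ Finset.range (N+1),
      (if k < β then D β * Real.exp (-(h * β)) else 0) := fun k => by simp only [hSdef]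
  have hWpos : ∀ k : ℕ, 0 < W k := by
    intro k
    simp only [hWdef]
    apply sub_pos.mpr
    apply Real.exp_lt_exp.mpr
    have h1 : ((k:ℝ)) < ((k+1:ℕ):ℝ) := by push_cast; linarith
    have h2 := mul_lt_mul_of_pos_left h1 hh
    linarith
  have hterm_nonneg : ∀ k ∈ Finset.range N, 0 ≤ S k * S k * W k :=
    fun k _ => mul_nonneg (mul_self_nonneg (S k)) (hWpos k).le
  have hQfinal : Q1 N z C = Q1 N z Cs + (∑ k ∈ Finset.range N, S k * S k * W k) / 2 := by
    rw [hQdiff, hDDG2, hM, hT]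
    ring
  constructor
  · rw [hQfinal]
    have := Finset.sum_nonneg hterm_nonneg
    linarith
  · intro heq β hβ
    have hzero : ∑ k ∈ Finset.range N, S k * S k * W k = 0 := by
      rw [hQfinal] at heq; linarith
    have hSk : ∀ k ∈ Finset.range N, S k = 0 := by
      intro k hk
      have h1 := (Finset.sum_eq_zero_iff_of_nonneg hterm_nonneg).mp hzero k hk
      have h2 : S k * S k = 0 := by
        rcases mul_eq_zero.mp h1 with h'|h'
        · exact h'
        · exact absurd h' (ne_of_gt (hWpos k))
      exact mul_self_eq_zero.mp h2
    have hSN : ∀ k, N ≤ k → S k = 0 := by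
      intro k hk
      rw [hSval]
      apply Finset.sum_eq_zero
      intro γ hγ'
      rw [Finset.mem_range] at hγ'
      rw [if_neg (by omega)]
    have hSall : ∀ k, S k = 0 := by
      intro k
      by_cases hk : k < N
      · exact hSk k (Finset.mem_range.mpr hk)
      · exact hSN k (by omega)
    have hy : D β * Real.exp (-(h * β)) = 0 := by
      rcases Nat.eq_zero_or_pos β with rfl|hpos
      · have e1 : ∑ γ ∈ Finset.range (N+1),
            (D γ * Real.exp (-(h * γ))
              - (if 0 < γ then D γ * Real.exp (-(h * γ)) else 0))
            = ∑ γ ∈ Finset.range (N+1),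
              (if γ = 0 then D γ * Real.exp (-(h * γ)) else 0) := by
          refine Finset.sum_congr rfl fun γ _ => ?_
          by_cases hg : γ = 0
          · subst hg; simp
          · rw [if_neg hg, if_pos (by omega)]; ring
        rw [Finset.sum_sub_distrib, hT] at e1
        have e2 := Finset.sum_ite_eq' (Finset.range (N+1)) 0
          (fun γ => D γ * Real.exp (-(h * γ)))
        rw [if_pos (Finset.mem_range.mpr (by omega))] at e2
        rw [e2] at e1
        rw [← hSval 0, hSall 0] at e1
        linarith [e1]
      · have e1 : ∑ γ ∈ Finset.range (N+1),
            ((if β - 1 < γ then D γ * Real.exp (-(h * γ)) else 0)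
              - (if β < γ then D γ * Real.exp (-(h * γ)) else 0))
            = ∑ γ ∈ Finset.range (N+1),
              (if γ = β then D γ * Real.exp (-(h * γ)) else 0) := by
          refine Finset.sum_congr rfl fun γ _ => ?_
          by_cases hg : γ = β
          · subst hg; rw [if_pos (by omega), if_neg (by omega), if_pos rfl]; ring
          · by_cases hg2 : β < γ
            · rw [if_pos (by omega), if_pos hg2, if_neg hg]; ring
            · rw [if_neg (by omega), if_neg hg2, if_neg hg]; ring
        rw [Finset.sum_sub_distrib] at e1
        have e2 := Finset.sum_ite_eq' (Finset.range (N+1)) β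
          (fun γ => D γ * Real.exp (-(h * γ)))
        rw [if_pos (Finset.mem_range.mpr (by omega))] at e2
        rw [e2] at e1
        rw [← hSval (β-1), ← hSval β, hSall (β-1), hSall β] at e1
        linarith [e1]
    have hD0 : D β = 0 :=
      (mul_eq_zero.mp hy).resolve_right (Real.exp_ne_zero _)
    have hCD : C β - optC1 N z β = 0 := by
      have := hD0
      simp only [hDdef, hCsdef] at this
      exact this
    linarith [hCD]
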